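/- Let n = 2m with m > 0, let i, j be distinct positive integers, u an integer, I = 2^i, J = 2^j. Set d_1 = 2^{i−1} − 2^{j−1} + u(2^m + 1), d_2 = 2^{i−1} + 2^{j−1} + (u − 2^{j−1})(2^m + 1), d_3 = −(2^{i−1} + 2^{j−1}) + (u + 2^{i−1})(2^m + 1). If gcd(d_1, 2^{2m} − 1) = 1 and gcd(2^i − 2^j, 2^m + 1) = 1, then x^{d_1} + x^{d_2} + x^{d_3} is a permutation polynomial of F_{2^{2m}}. -/

import Mathlib

section Aux

/-- In a group, if `g ^ N = 1` with `0 < N`, then `g ^ ((d % N).toNat) = g ^ d`. -/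
lemma aux_pow_mod {G : Type*} [Group G] (g : G) (N : ℕ) (hN : 0 < N)
    (hg : g ^ N = 1) (d : ℤ) : g ^ (d % (N : ℤ)).toNat = g ^ d := by
  have hNz : (N : ℤ) ≠ 0 := by exact_mod_cast hN.ne'
  have h0 : ((d % (N : ℤ)).toNat : ℤ) = d % (N : ℤ) :=
    Int.toNat_of_nonneg (Int.emod_nonneg d hNz)
  have hg' : g ^ (N : ℤ) = 1 := by rw [zpow_natCast, hg]
  calc g ^ (d % (N : ℤ)).toNat = g ^ ((d % (N : ℤ)).toNat : ℤ) := (zpow_natCast g _).symm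
    _ = g ^ (d % (N : ℤ)) := by rw [h0]
    _ = g ^ (d % (N : ℤ)) * (g ^ ((N : ℤ)))^(d / (N : ℤ)) := by rw [hg', one_zpow, mul_one]
    _ = g ^ (d % (N : ℤ) + (N : ℤ) * (d / (N : ℤ))) := by rw [zpow_add, zpow_mul]
    _ = g ^ d := by rw [Int.emod_add_mul_ediv]

/-- The trinomial kernel `T(w) = w^a (w^q)^b + w^(a+b) + (w^q)^(a+b)`. -/
def auxT (q a b : ℕ) {F : Type*} [CommRing F] (w : F) : F :=
  w ^ a * (w ^ q) ^ b + w ^ (a + b) + (w ^ q) ^ (a + b)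

/-- `A(w) = w^a (w^q)^b + (w^q)^a w^b`. -/
def auxA (q a b : ℕ) {F : Type*} [CommRing F] (w : F) : F :=
  w ^ a * (w ^ q) ^ b + (w ^ q) ^ a * w ^ b

lemma aux_homT (q a b : ℕ) {F : Type*} [CommRing F] (s w : F) (hs : s ^ q = s) :
    auxT q a b (s * w) = s ^ (a + b) * auxT q a b w := by
  simp only [auxT, mul_pow, hs]; ring

lemma aux_homA (q a b : ℕ) {F : Type*} [CommRing F] (s w : F) (hs : s ^ q = s) :
    auxA q a b (s * w) = s ^ (a + b) * auxA q a b w := by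
  simp only [auxA, mul_pow, hs]; ring

lemma aux_Tq (q a b : ℕ) {F : Type*} [CommRing F] (w : F) (hw : (w ^ q) ^ q = w)
    (hfq : ∀ x y : F, (x + y) ^ q = x ^ q + y ^ q) (htwo : (2 : F) = 0) :
    (auxT q a b w) ^ q = auxT q a b w + auxA q a b w := by
  have hswap : ∀ (x : F) (mm nn : ℕ), (x ^ mm) ^ nn = (x ^ nn) ^ mm := fun x mm nn => by
    rw [← pow_mul, mul_comm, pow_mul]
  simp only [auxT, auxA]
  rw [hfq, hfq, mul_pow]
  rw [hswap w a q, hswap (w ^ q) b q, hw, hswap w (a + b) q, hswap (w ^ q) (a + b) q, hw]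
  linear_combination (-(w ^ a * (w ^ q) ^ b)) * htwo


/-- If `X^a X̄^b = X̄^a X^b` for a unit `X`, then `X ∈ F_q` (uses `gcd(2^i-2^j, 2^m+1)=1`). -/
lemma aux_fq {F : Type*} [Field F] [Fintype F] (m i j : ℕ) (hi : 0 < i) (hj : 0 < j)
    (hF : Fintype.card F = 2 ^ (2 * m))
    (hgcd2 : Int.gcd (2 ^ i - 2 ^ j) (2 ^ m + 1) = 1)
    (g : Fˣ)
    (hA : (g : F) ^ (2 ^ (i - 1)) * ((g : F) ^ (2 ^ m)) ^ (2 ^ (j - 1))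
        = ((g : F) ^ (2 ^ m)) ^ (2 ^ (i - 1)) * (g : F) ^ (2 ^ (j - 1))) :
    (g : F) ^ (2 ^ m) = (g : F) := by
  classical
  have hq2 : ∀ X : F, (X ^ (2 ^ m)) ^ (2 ^ m) = X := by
    intro X
    rw [← pow_mul]
    have h1 : 2 ^ m * 2 ^ m = 2 ^ (2 * m) := by rw [two_mul, pow_add]
    rw [h1, ← hF, FiniteField.pow_card]
  set X : F := (g : F) with hX
  have hXne : X ≠ 0 := Units.ne_zero g
  have hXqne : X ^ (2 ^ m) ≠ 0 := pow_ne_zero _ hXne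
  -- the unit g * (g^q)⁻¹
  set v : Fˣ := g * (g ^ (2 ^ m : ℕ))⁻¹ with hv
  have hvc : (v : F) = X * (X ^ (2 ^ m))⁻¹ := by
    rw [hv]
    push_cast
    rfl
  have hvab : v ^ (2 ^ (i - 1) : ℕ) = v ^ (2 ^ (j - 1) : ℕ) := by
    apply Units.ext
    rw [Units.val_pow_eq_pow_val, Units.val_pow_eq_pow_val, hvc, mul_pow, mul_pow,
      inv_pow, inv_pow]
    field_simp
    linear_combination hA
  have hv2i : v ^ (2 ^ i : ℕ) = v ^ (2 ^ j : ℕ) := by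
    have e1 : (2 : ℕ) ^ i = 2 ^ (i - 1) * 2 := by
      rw [← pow_succ, Nat.sub_add_cancel hi]
    have e2 : (2 : ℕ) ^ j = 2 ^ (j - 1) * 2 := by
      rw [← pow_succ, Nat.sub_add_cancel hj]
    rw [e1, e2, pow_mul, pow_mul, hvab]
  have hord1 : ((orderOf v : ℤ)) ∣ 2 ^ i - 2 ^ j := by
    rw [orderOf_dvd_iff_zpow_eq_one]
    have ci : ((2 : ℤ) ^ i) = ((2 ^ i : ℕ) : ℤ) := by push_cast; ring
    have cj : ((2 : ℤ) ^ j) = ((2 ^ j : ℕ) : ℤ) := by push_cast; ring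
    rw [sub_eq_add_neg, zpow_add, ci, cj, zpow_natCast, zpow_neg, zpow_natCast, hv2i]
    simp
  have hord2 : ((orderOf v : ℤ)) ∣ 2 ^ m + 1 := by
    rw [orderOf_dvd_iff_zpow_eq_one]
    have hvq1 : v ^ ((2 ^ m + 1 : ℕ)) = 1 := by
      apply Units.ext
      rw [Units.val_pow_eq_pow_val, hvc, mul_pow, inv_pow, Units.val_one]
      field_simp
      rw [pow_add, pow_add, pow_one, pow_one, hq2 X]
      ring
    have c1 : ((2 : ℤ) ^ m + 1) = ((2 ^ m + 1 : ℕ) : ℤ) := by push_cast; ring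
    rw [c1, zpow_natCast, hvq1]
  have hdvd : ((orderOf v : ℤ)) ∣ ((Int.gcd (2 ^ i - 2 ^ j) (2 ^ m + 1) : ℕ) : ℤ) :=
    Int.dvd_coe_gcd hord1 hord2
  rw [hgcd2] at hdvd
  have hone : orderOf v = 1 := by
    have : orderOf v ∣ 1 := by exact_mod_cast hdvd
    exact Nat.dvd_one.mp this
  have hv1 : v = 1 := orderOf_eq_one_iff.mp hone
  have : g = g ^ (2 ^ m : ℕ) := by
    rw [hv] at hv1
    exact mul_inv_eq_one.mp hv1
  have h := congrArg (Units.val) this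
  rw [Units.val_pow_eq_pow_val] at h
  exact h.symm


/-- Nonvanishing of `T` on nonzero elements. -/
lemma aux_TZ {F : Type*} [Field F] [Fintype F] (m i j : ℕ) (hi : 0 < i) (hj : 0 < j)
    (hF : Fintype.card F = 2 ^ (2 * m))
    (hgcd2 : Int.gcd (2 ^ i - 2 ^ j) (2 ^ m + 1) = 1)
    (htwo : (2 : F) = 0)
    (hfresh : ∀ (k : ℕ) (x y : F), (x + y) ^ (2 ^ k) = x ^ (2 ^ k) + y ^ (2 ^ k))
    (g : Fˣ) : auxT (2 ^ m) (2 ^ (i - 1)) (2 ^ (j - 1)) (g : F) ≠ 0 := by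
  intro h0
  have hq2 : ∀ X : F, (X ^ (2 ^ m)) ^ (2 ^ m) = X := by
    intro X
    rw [← pow_mul]
    have h1 : 2 ^ m * 2 ^ m = 2 ^ (2 * m) := by rw [two_mul, pow_add]
    rw [h1, ← hF, FiniteField.pow_card]
  set X : F := (g : F) with hX
  have hTq := aux_Tq (2 ^ m) (2 ^ (i - 1)) (2 ^ (j - 1)) X (hq2 X) (hfresh m) htwo
  rw [h0, zero_pow (by positivity)] at hTq
  have hA0 : auxA (2 ^ m) (2 ^ (i - 1)) (2 ^ (j - 1)) X = 0 := by linear_combination -hTq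
  have hAB : X ^ (2 ^ (i - 1)) * (X ^ (2 ^ m)) ^ (2 ^ (j - 1))
      = (X ^ (2 ^ m)) ^ (2 ^ (i - 1)) * X ^ (2 ^ (j - 1)) := by
    simp only [auxA] at hA0
    linear_combination hA0 - ((X ^ (2 ^ m)) ^ (2 ^ (i - 1)) * X ^ (2 ^ (j - 1))) * htwo
  have hfix : X ^ (2 ^ m) = X := aux_fq m i j hi hj hF hgcd2 g hAB
  have hval : auxT (2 ^ m) (2 ^ (i - 1)) (2 ^ (j - 1)) X = X ^ (2 ^ (i - 1) + 2 ^ (j - 1)) := by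
    simp only [auxT, hfix]
    linear_combination (X ^ (2 ^ (i - 1) + 2 ^ (j - 1))) * htwo
  rw [hval] at h0
  exact Units.ne_zero g ((pow_eq_zero_iff (by positivity)).mp h0)


/-- Key injectivity step on the "unit circle" parametrization. -/
lemma aux_B {F : Type*} [Field F] [Fintype F] (m i j : ℕ) (hi : 0 < i) (hj : 0 < j)
    (hF : Fintype.card F = 2 ^ (2 * m))
    (hgcd2 : Int.gcd (2 ^ i - 2 ^ j) (2 ^ m + 1) = 1)
    (htwo : (2 : F) = 0)
    (hfresh : ∀ (k : ℕ) (x y : F), (x + y) ^ (2 ^ k) = x ^ (2 ^ k) + y ^ (2 ^ k))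
    (γ t : F) (hγ : γ ^ (2 ^ m) = γ + 1) (ht : t ^ (2 ^ m) = t)
    (hE : auxT (2 ^ m) (2 ^ (i - 1)) (2 ^ (j - 1)) γ * auxA (2 ^ m) (2 ^ (i - 1)) (2 ^ (j - 1)) (γ + t)
        = auxT (2 ^ m) (2 ^ (i - 1)) (2 ^ (j - 1)) (γ + t) * auxA (2 ^ m) (2 ^ (i - 1)) (2 ^ (j - 1)) γ) :
    t = 0 := by
  classical
  by_contra ht0
  -- atomize the main equation
  have hγt : (γ + t) ^ (2 ^ m) = γ + 1 + t := by rw [hfresh m, hγ, ht]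
  simp only [auxT, auxA] at hE
  rw [hγt, hγ] at hE
  simp only [pow_add] at hE
  simp only [hfresh (i - 1), hfresh (j - 1), one_pow] at hE
  have hE' : t ^ (2 ^ (j - 1)) * (1 + γ ^ (2 ^ (i - 1)) + γ ^ (2 ^ (i - 1)) * γ ^ (2 ^ (i - 1)))
      + t ^ (2 ^ (i - 1)) * (1 + γ ^ (2 ^ (j - 1)) + γ ^ (2 ^ (j - 1)) * γ ^ (2 ^ (j - 1)))
      + t ^ (2 ^ (i - 1)) * t ^ (2 ^ (j - 1)) * (γ ^ (2 ^ (i - 1)) + γ ^ (2 ^ (j - 1))) = 0 := by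
    linear_combination hE + (γ ^ (2 ^ (j - 1)) * γ ^ (2 ^ (j - 1)) * t ^ (2 ^ (i - 1))
      + γ ^ (2 ^ (j - 1)) * t ^ (2 ^ (i - 1)) * t ^ (2 ^ (j - 1))
      - γ ^ (2 ^ (i - 1)) * t ^ (2 ^ (j - 1))
      - t ^ (2 ^ (i - 1)) * t ^ (2 ^ (j - 1))) * htwo
  -- the auxiliary element ρ
  set ρ : F := t⁻¹ * (γ * γ + γ + 1) + γ with hρ
  have hto : t * t⁻¹ = 1 := mul_inv_cancel₀ ht0
  have h1 : t ^ (2 ^ (i - 1)) * (t⁻¹) ^ (2 ^ (i - 1)) = 1 := by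
    rw [← mul_pow, hto, one_pow]
  have h2 : t ^ (2 ^ (j - 1)) * (t⁻¹) ^ (2 ^ (j - 1)) = 1 := by
    rw [← mul_pow, hto, one_pow]
  have hra : ρ ^ (2 ^ (i - 1)) = (t⁻¹) ^ (2 ^ (i - 1)) * (γ ^ (2 ^ (i - 1)) * γ ^ (2 ^ (i - 1))
      + γ ^ (2 ^ (i - 1)) + 1) + γ ^ (2 ^ (i - 1)) := by
    rw [hρ, hfresh (i - 1), mul_pow, hfresh (i - 1) (γ * γ + γ) 1, hfresh (i - 1) (γ * γ) γ,
      mul_pow, one_pow]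
  have hrb : ρ ^ (2 ^ (j - 1)) = (t⁻¹) ^ (2 ^ (j - 1)) * (γ ^ (2 ^ (j - 1)) * γ ^ (2 ^ (j - 1))
      + γ ^ (2 ^ (j - 1)) + 1) + γ ^ (2 ^ (j - 1)) := by
    rw [hρ, hfresh (j - 1), mul_pow, hfresh (j - 1) (γ * γ + γ) 1, hfresh (j - 1) (γ * γ) γ,
      mul_pow, one_pow]
  have hkey : t ^ (2 ^ (i - 1)) * t ^ (2 ^ (j - 1)) * (ρ ^ (2 ^ (i - 1)) + ρ ^ (2 ^ (j - 1))) = 0 := by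
    linear_combination hE' + (t ^ (2 ^ (i - 1)) * t ^ (2 ^ (j - 1))) * hra
      + (t ^ (2 ^ (i - 1)) * t ^ (2 ^ (j - 1))) * hrb
      + (t ^ (2 ^ (j - 1)) * (γ ^ (2 ^ (i - 1)) * γ ^ (2 ^ (i - 1)) + γ ^ (2 ^ (i - 1)) + 1)) * h1
      + (t ^ (2 ^ (i - 1)) * (γ ^ (2 ^ (j - 1)) * γ ^ (2 ^ (j - 1)) + γ ^ (2 ^ (j - 1)) + 1)) * h2
  have hsum : ρ ^ (2 ^ (i - 1)) + ρ ^ (2 ^ (j - 1)) = 0 := by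
    have hne : t ^ (2 ^ (i - 1)) * t ^ (2 ^ (j - 1)) ≠ 0 :=
      mul_ne_zero (pow_ne_zero _ ht0) (pow_ne_zero _ ht0)
    exact (mul_eq_zero.mp hkey).resolve_left hne
  have hLL : ρ ^ (2 ^ (i - 1)) = ρ ^ (2 ^ (j - 1)) := by
    linear_combination hsum - (ρ ^ (2 ^ (j - 1))) * htwo
  have hωq : (t⁻¹) ^ (2 ^ m) = t⁻¹ := by rw [inv_pow, ht]
  have hρconj : ρ ^ (2 ^ m) = ρ + 1 := by
    rw [hρ, hfresh m, mul_pow, hfresh m (γ * γ + γ) 1, hfresh m (γ * γ) γ, mul_pow, one_pow,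
      hγ, hωq]
    linear_combination (t⁻¹ * (γ + 1)) * htwo
  have hρne : ρ ≠ 0 := by
    intro hr0
    have hγeq : γ = t⁻¹ * (γ * γ + γ + 1) := by
      linear_combination hr0 - (t⁻¹ * (γ * γ + γ + 1)) * htwo
    have hfixed : γ ^ (2 ^ m) = γ := by
      conv_lhs => rw [hγeq]
      rw [mul_pow, hfresh m (γ * γ + γ) 1, hfresh m (γ * γ) γ, mul_pow, one_pow, hγ, hωq]
      conv_rhs => rw [hγeq]
      linear_combination (t⁻¹ * (γ + 1)) * htwo
    rw [hγ] at hfixed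
    exact one_ne_zero (α := F) (by linear_combination hfixed)
  -- lift ρ to the unit group and use the order argument
  set vρ : Fˣ := Units.mk0 ρ hρne with hvρ
  have hvc : (vρ : F) = ρ := rfl
  have hv2i : vρ ^ (2 ^ i : ℕ) = vρ ^ (2 ^ j : ℕ) := by
    apply Units.ext
    rw [Units.val_pow_eq_pow_val, Units.val_pow_eq_pow_val, hvc]
    have e1 : (2 : ℕ) ^ i = 2 ^ (i - 1) * 2 := by rw [← pow_succ, Nat.sub_add_cancel hi]
    have e2 : (2 : ℕ) ^ j = 2 ^ (j - 1) * 2 := by rw [← pow_succ, Nat.sub_add_cancel hj]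
    rw [e1, e2, pow_mul, pow_mul, hLL]
  have hord1 : ((orderOf vρ : ℤ)) ∣ 2 ^ i - 2 ^ j := by
    rw [orderOf_dvd_iff_zpow_eq_one]
    have ci : ((2 : ℤ) ^ i) = ((2 ^ i : ℕ) : ℤ) := by push_cast; ring
    have cj : ((2 : ℤ) ^ j) = ((2 ^ j : ℕ) : ℤ) := by push_cast; ring
    rw [sub_eq_add_neg, zpow_add, ci, cj, zpow_natCast, zpow_neg, zpow_natCast, hv2i]
    simp
  have hord2 : ((orderOf vρ : ℤ)) ∣ ((2 : ℤ) ^ m - 1) * ((2 : ℤ) ^ m + 1) := by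
    have hcardu : Fintype.card Fˣ = 2 ^ (2 * m) - 1 := by rw [Fintype.card_units, hF]
    have hc : vρ ^ (2 ^ (2 * m) - 1 : ℕ) = 1 := by rw [← hcardu]; exact pow_card_eq_one
    have : (orderOf vρ) ∣ (2 ^ (2 * m) - 1 : ℕ) := orderOf_dvd_of_pow_eq_one hc
    have h4 : (((2 : ℕ) ^ (2 * m) - 1 : ℕ) : ℤ) = ((2 : ℤ) ^ m - 1) * ((2 : ℤ) ^ m + 1) := by
      have h5 : (1 : ℕ) ≤ 2 ^ (2 * m) := Nat.one_le_two_pow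
      push_cast [h5]
      rw [two_mul, pow_add]
      ring
    rw [← h4]
    exact_mod_cast Int.natCast_dvd_natCast.mpr this
  have hcop : IsCoprime ((orderOf vρ : ℤ)) ((2 : ℤ) ^ m + 1) := by
    have hco : IsCoprime ((2 : ℤ) ^ i - 2 ^ j) ((2 : ℤ) ^ m + 1) :=
      Int.isCoprime_iff_gcd_eq_one.mpr hgcd2
    exact IsCoprime.of_isCoprime_of_dvd_left hco hord1
  have hordq : ((orderOf vρ : ℤ)) ∣ ((2 : ℤ) ^ m - 1) := hcop.dvd_of_dvd_mul_right hord2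
  have hfix : vρ ^ (2 ^ m : ℕ) = vρ := by
    have h5 : (1 : ℕ) ≤ 2 ^ m := Nat.one_le_two_pow
    have hnat : ((orderOf vρ)) ∣ (2 ^ m - 1 : ℕ) := by
      have hcast : (((2 : ℕ) ^ m - 1 : ℕ) : ℤ) = ((2 : ℤ) ^ m - 1) := by push_cast [h5]; ring
      rw [← hcast] at hordq
      exact_mod_cast hordq
    have h6 : vρ ^ (2 ^ m - 1 : ℕ) = 1 := orderOf_dvd_iff_pow_eq_one.mp hnat
    calc vρ ^ (2 ^ m : ℕ) = vρ ^ (2 ^ m - 1 + 1 : ℕ) := by rw [Nat.sub_add_cancel h5]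
      _ = vρ ^ (2 ^ m - 1 : ℕ) * vρ := by rw [pow_succ]
      _ = vρ := by rw [h6, one_mul]
  have hfixF : ρ ^ (2 ^ m) = ρ := by
    have h := congrArg (Units.val) hfix
    rw [Units.val_pow_eq_pow_val] at h
    exact h
  rw [hρconj] at hfixF
  exact one_ne_zero (α := F) (by linear_combination hfixF)


/-- If `T(X) = λ T(Z)` with `λ ∈ F_q`, then `X/Z ∈ F_q`. -/
lemma aux_main {F : Type*} [Field F] [Fintype F] (m i j : ℕ) (hi : 0 < i) (hj : 0 < j)
    (hF : Fintype.card F = 2 ^ (2 * m))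
    (hgcd2 : Int.gcd (2 ^ i - 2 ^ j) (2 ^ m + 1) = 1)
    (htwo : (2 : F) = 0)
    (hfresh : ∀ (k : ℕ) (x y : F), (x + y) ^ (2 ^ k) = x ^ (2 ^ k) + y ^ (2 ^ k))
    (g h : Fˣ) (lam : F) (hlam : lam ^ (2 ^ m) = lam)
    (hT : auxT (2 ^ m) (2 ^ (i - 1)) (2 ^ (j - 1)) (g : F)
        = lam * auxT (2 ^ m) (2 ^ (i - 1)) (2 ^ (j - 1)) (h : F)) :
    (g : F) * ((h : F) ^ (2 ^ m)) = ((g : F) ^ (2 ^ m)) * (h : F) := by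
  classical
  have hq2 : ∀ X : F, (X ^ (2 ^ m)) ^ (2 ^ m) = X := by
    intro X
    rw [← pow_mul]
    have h1 : 2 ^ m * 2 ^ m = 2 ^ (2 * m) := by rw [two_mul, pow_add]
    rw [h1, ← hF, FiniteField.pow_card]
  set q : ℕ := 2 ^ m with hq
  set a : ℕ := 2 ^ (i - 1) with ha
  set b : ℕ := 2 ^ (j - 1) with hb
  set X : F := (g : F) with hX
  set Z : F := (h : F) with hZ
  have hfq : ∀ x y : F, (x + y) ^ q = x ^ q + y ^ q := hfresh m
  have hTg := aux_Tq q a b X (hq2 X) hfq htwo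
  have hTh := aux_Tq q a b Z (hq2 Z) hfq htwo
  have hTXne : auxT q a b X ≠ 0 := aux_TZ m i j hi hj hF hgcd2 htwo hfresh g
  have hTZne : auxT q a b Z ≠ 0 := aux_TZ m i j hi hj hF hgcd2 htwo hfresh h
  have hlamne : lam ≠ 0 := by
    intro h0
    rw [h0, zero_mul] at hT
    exact hTXne hT
  have hswap : ∀ (x : F) (mm nn : ℕ), (x ^ mm) ^ nn = (x ^ nn) ^ mm := fun x mm nn => by
    rw [← pow_mul, mul_comm, pow_mul]
  -- helper: from A(w) = 0 deduce w^q = w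
  have hAfq : ∀ (k : Fˣ), auxA q a b (k : F) = 0 → (k : F) ^ q = (k : F) := by
    intro k hk
    apply aux_fq m i j hi hj hF hgcd2 k
    simp only [auxA] at hk
    linear_combination hk - (((k : F) ^ q) ^ a * (k : F) ^ b) * htwo
  by_cases hZf : Z ^ q = Z
  · -- Z in F_q; then T(X) is fixed by Frobenius, hence X in F_q
    have hvalZ : auxT q a b Z = Z ^ (a + b) := by
      simp only [auxT, hZf]
      linear_combination (Z ^ (a + b)) * htwo
    have hThq : (auxT q a b Z) ^ q = auxT q a b Z := by
      rw [hvalZ, hswap, hZf]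
    have hTXq : (auxT q a b X) ^ q = auxT q a b X := by
      rw [hT, mul_pow, hlam, hThq]
    have hAX : auxA q a b X = 0 := by linear_combination hTXq - hTg
    have hfix : X ^ q = X := hAfq g hAX
    rw [hfix, hZf]
  · by_cases hXf : X ^ q = X
    · exfalso
      have hvalX : auxT q a b X = X ^ (a + b) := by
        simp only [auxT, hXf]
        linear_combination (X ^ (a + b)) * htwo
      have hTXq : (auxT q a b X) ^ q = auxT q a b X := by
        rw [hvalX, hswap, hXf]
      have hTZq : (auxT q a b Z) ^ q = auxT q a b Z := by
        apply mul_left_cancel₀ hlamne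
        have h1 : (auxT q a b X) ^ q = lam * (auxT q a b Z) ^ q := by
          rw [hT, mul_pow, hlam]
        rw [← h1, hTXq, hT]
      have hAZ : auxA q a b Z = 0 := by linear_combination hTZq - hTh
      exact hZf (hAfq h hAZ)
    · -- main case
      set s : F := X + X ^ q with hs
      set r : F := Z + Z ^ q with hr
      have hsne : s ≠ 0 := by
        intro h0
        exact hXf (by linear_combination h0 - X * htwo)
      have hrne : r ≠ 0 := by
        intro h0
        exact hZf (by linear_combination h0 - Z * htwo)
      have hsq : s ^ q = s := by rw [hs, hfq, hq2]; ring
      have hrq : r ^ q = r := by rw [hr, hfq, hq2]; ring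
      set γ : F := X * s⁻¹ with hγdef
      set γ' : F := Z * r⁻¹ with hγ'def
      have hγ : γ ^ q = γ + 1 := by
        rw [hγdef, mul_pow, inv_pow, hsq]
        field_simp
        linear_combination (-X) * htwo
      have hγ' : γ' ^ q = γ' + 1 := by
        rw [hγ'def, mul_pow, inv_pow, hrq]
        field_simp
        linear_combination (-Z) * htwo
      set t : F := γ + γ' with htdef
      have ht : t ^ q = t := by
        rw [htdef, hfq, hγ, hγ']
        linear_combination htwo
      -- cross equation
      have hTXq2 : (auxT q a b X) ^ q = lam * (auxT q a b Z) ^ q := by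
        rw [hT, mul_pow, hlam]
      have hAg : auxA q a b X = lam * auxA q a b Z := by
        linear_combination hTXq2 - hT + lam * hTh - hTg
      have hTA : auxT q a b X * auxA q a b Z = auxT q a b Z * auxA q a b X := by
        rw [hT, hAg]; ring
      have hXs : X = s * γ := by
        rw [hγdef]
        field_simp
      have hZr : Z = r * γ' := by
        rw [hγ'def]
        field_simp
      rw [hXs, hZr, aux_homT q a b s γ hsq, aux_homA q a b s γ hsq,
        aux_homT q a b r γ' hrq, aux_homA q a b r γ' hrq] at hTA
      have hcan : auxT q a b γ * auxA q a b γ' = auxT q a b γ' * auxA q a b γ := by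
        have hsr : s ^ (a + b) * r ^ (a + b) ≠ 0 :=
          mul_ne_zero (pow_ne_zero _ hsne) (pow_ne_zero _ hrne)
        apply mul_left_cancel₀ hsr
        linear_combination hTA
      have hγ'e : γ' = γ + t := by
        rw [htdef]
        linear_combination (-γ) * htwo
      rw [hγ'e] at hcan
      have ht0 : t = 0 := aux_B m i j hi hj hF hgcd2 htwo hfresh γ t hγ ht hcan
      have hγγ' : γ = γ' := by rw [hγ'e, ht0, add_zero]
      have hXr : X * r = Z * s := by
        have h5 : X * s⁻¹ = Z * r⁻¹ := by rw [← hγdef, ← hγ'def, hγγ']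
        field_simp at h5
        linear_combination h5
      rw [hs, hr] at hXr
      linear_combination hXr

end Aux

open scoped Classical in
theorem stmt_10 (m : ℕ) (hm : 0 < m) (i j : ℕ) (hi : 0 < i) (hj : 0 < j) (hij : i ≠ j)
    (u : ℤ)
    (d₁ d₂ d₃ : ℤ)
    (hd₁ : d₁ = 2 ^ (i - 1) - 2 ^ (j - 1) + u * (2 ^ m + 1))
    (hd₂ : d₂ = 2 ^ (i - 1) + 2 ^ (j - 1) + (u - 2 ^ (j - 1)) * (2 ^ m + 1))
    (hd₃ : d₃ = -(2 ^ (i - 1) + 2 ^ (j - 1)) + (u + 2 ^ (i - 1)) * (2 ^ m + 1))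
    (hgcd1 : Int.gcd d₁ (2 ^ (2 * m) - 1) = 1)
    (hgcd2 : Int.gcd (2 ^ i - 2 ^ j) (2 ^ m + 1) = 1)
    (F : Type*) [Field F] [Fintype F] (hF : Fintype.card F = 2 ^ (2 * m)) :
    Function.Bijective (fun x : F =>
      if x = 0 then 0 else
        x ^ (d₁ % (2 ^ (2 * m) - 1)).toNat + x ^ (d₂ % (2 ^ (2 * m) - 1)).toNat +
          x ^ (d₃ % (2 ^ (2 * m) - 1)).toNat) := by
  classical
  -- characteristic 2
  obtain ⟨p, hp⟩ := CharP.exists F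
  haveI := hp
  obtain ⟨n, hpp, hcard⟩ := FiniteField.card F p
  have hp2 : p = 2 := by
    have h1 : p ∣ 2 ^ (2 * m) := by
      rw [← hF, hcard]
      exact dvd_pow_self p (by positivity)
    have h2 := Nat.Prime.dvd_of_dvd_pow hpp h1
    exact (Nat.prime_dvd_prime_iff_eq hpp Nat.prime_two).mp h2
  subst hp2
  have htwo : (2 : F) = 0 := by
    have h3 := CharP.cast_eq_zero F 2
    exact_mod_cast h3
  have hfresh : ∀ (k : ℕ) (x y : F), (x + y) ^ (2 ^ k) = x ^ (2 ^ k) + y ^ (2 ^ k) :=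
    fun k x y => add_pow_char_pow x y 2 k
  -- numeric facts
  have hNpos : 0 < 2 ^ (2 * m) - 1 := by
    have h4 : (4 : ℕ) ≤ 2 ^ (2 * m) := by
      calc (4 : ℕ) = 2 ^ 2 := by norm_num
        _ ≤ 2 ^ (2 * m) := Nat.pow_le_pow_right (by norm_num) (by omega)
    omega
  have hcast : (((2 : ℕ) ^ (2 * m) - 1 : ℕ) : ℤ) = 2 ^ (2 * m) - 1 := by
    push_cast [Nat.one_le_two_pow]
    ring
  have hcardu : Fintype.card Fˣ = 2 ^ (2 * m) - 1 := by rw [Fintype.card_units, hF]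
  have hgu : ∀ gg : Fˣ, gg ^ (2 ^ (2 * m) - 1 : ℕ) = 1 := fun gg => by
    rw [← hcardu]; exact pow_card_eq_one
  set M : ℤ := (2 ^ m + 1) * (u - 2 ^ (j - 1)) with hM
  -- the value of the map on nonzero elements
  have hfval : ∀ gg : Fˣ,
      (gg : F) ^ (d₁ % (2 ^ (2 * m) - 1)).toNat + (gg : F) ^ (d₂ % (2 ^ (2 * m) - 1)).toNat +
        (gg : F) ^ (d₃ % (2 ^ (2 * m) - 1)).toNat
      = ((gg ^ M : Fˣ) : F) * auxT (2 ^ m) (2 ^ (i - 1)) (2 ^ (j - 1)) (gg : F) := by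
    intro gg
    have hmod : ∀ d : ℤ, ((gg : F)) ^ (d % (2 ^ (2 * m) - 1)).toNat = ((gg ^ d : Fˣ) : F) := by
      intro d
      have h7 := aux_pow_mod gg (2 ^ (2 * m) - 1) hNpos (hgu gg) d
      rw [hcast] at h7
      rw [← h7, Units.val_pow_eq_pow_val]
    rw [hmod d₁, hmod d₂, hmod d₃]
    have h1 : gg ^ d₁ = gg ^ M * gg ^ ((2 ^ (i - 1) + 2 ^ m * 2 ^ (j - 1) : ℕ) : ℤ) := by
      rw [← zpow_add]
      congr 1
      push_cast
      rw [hd₁, hM]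
      ring
    have h2 : gg ^ d₂ = gg ^ M * gg ^ ((2 ^ (i - 1) + 2 ^ (j - 1) : ℕ) : ℤ) := by
      rw [← zpow_add]
      congr 1
      push_cast
      rw [hd₂, hM]
      ring
    have h3 : gg ^ d₃ = gg ^ M * gg ^ ((2 ^ m * (2 ^ (i - 1) + 2 ^ (j - 1)) : ℕ) : ℤ) := by
      rw [← zpow_add]
      congr 1
      push_cast
      rw [hd₃, hM]
      ring
    rw [h1, h2, h3]
    simp only [zpow_natCast, Units.val_mul, Units.val_pow_eq_pow_val]
    simp only [auxT]
    rw [pow_add ((gg : F)) (2 ^ (i - 1)) (2 ^ m * 2 ^ (j - 1)),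
      pow_mul ((gg : F)) (2 ^ m) (2 ^ (j - 1)),
      pow_mul ((gg : F)) (2 ^ m) (2 ^ (i - 1) + 2 ^ (j - 1))]
    ring
  -- reduce to injectivity
  rw [← Finite.injective_iff_bijective]
  intro x y hxy
  simp only at hxy
  by_cases hx : x = 0 <;> by_cases hy : y = 0
  · rw [hx, hy]
  · exfalso
    rw [if_pos hx, if_neg hy] at hxy
    have h8 := hfval (Units.mk0 y hy)
    rw [Units.val_mk0] at h8
    rw [h8] at hxy
    have h9 := aux_TZ m i j hi hj hF hgcd2 htwo hfresh (Units.mk0 y hy)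
    rw [Units.val_mk0] at h9
    exact (mul_ne_zero (Units.ne_zero _) h9) hxy.symm
  · exfalso
    rw [if_neg hx, if_pos hy] at hxy
    have h8 := hfval (Units.mk0 x hx)
    rw [Units.val_mk0] at h8
    rw [h8] at hxy
    have h9 := aux_TZ m i j hi hj hF hgcd2 htwo hfresh (Units.mk0 x hx)
    rw [Units.val_mk0] at h9
    exact (mul_ne_zero (Units.ne_zero _) h9) hxy
  · rw [if_neg hx, if_neg hy] at hxy
    set gx : Fˣ := Units.mk0 x hx with hgxdef
    set gy : Fˣ := Units.mk0 y hy with hgydef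
    have hxg : x = (gx : F) := rfl
    have hyg : y = (gy : F) := rfl
    rw [hxg, hyg] at hxy
    rw [hfval gx, hfval gy] at hxy
    have h9y : auxT (2 ^ m) (2 ^ (i - 1)) (2 ^ (j - 1)) ((gy : F)) ≠ 0 :=
      aux_TZ m i j hi hj hF hgcd2 htwo hfresh gy
    -- the scalar lam
    set lam : F := ((gy ^ M * (gx ^ M)⁻¹ : Fˣ) : F) with hlamdef
    have hlam : lam ^ (2 ^ m) = lam := by
      have hvv : gy ^ M * (gx ^ M)⁻¹ = (gy * gx⁻¹) ^ M := by rw [mul_zpow, inv_zpow]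
      rw [hlamdef, hvv, ← Units.val_pow_eq_pow_val]
      congr 1
      rw [← zpow_natCast ((gy * gx⁻¹) ^ M), ← zpow_mul]
      have hmz : M * ((2 ^ m : ℕ) : ℤ) = M + ((2 ^ (2 * m) - 1 : ℕ) : ℤ) * (u - 2 ^ (j - 1)) := by
        rw [hcast, hM]
        push_cast
        ring
      rw [hmz, zpow_add,
        zpow_mul (gy * gx⁻¹) (((2 ^ (2 * m) - 1 : ℕ) : ℤ)) (u - 2 ^ (j - 1)),
        zpow_natCast, hgu, one_zpow, mul_one]
    have hgxMne : ((gx ^ M : Fˣ) : F) ≠ 0 := Units.ne_zero _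
    have hgyMne : ((gy ^ M : Fˣ) : F) ≠ 0 := Units.ne_zero _
    have hT : auxT (2 ^ m) (2 ^ (i - 1)) (2 ^ (j - 1)) ((gx : F))
        = lam * auxT (2 ^ m) (2 ^ (i - 1)) (2 ^ (j - 1)) ((gy : F)) := by
      have h' : ((gx ^ M : Fˣ) : F) * auxT (2 ^ m) (2 ^ (i - 1)) (2 ^ (j - 1)) ((gx : F))
          * (((gx ^ M : Fˣ) : F))⁻¹
          = ((gy ^ M : Fˣ) : F) * auxT (2 ^ m) (2 ^ (i - 1)) (2 ^ (j - 1)) ((gy : F))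
          * (((gx ^ M : Fˣ) : F))⁻¹ := by rw [hxy]
      rw [mul_comm (((gx ^ M : Fˣ) : F)) _, mul_assoc, mul_inv_cancel₀ hgxMne, mul_one] at h'
      rw [hlamdef, Units.val_mul, Units.val_inv_eq_inv_val, h']
      ring
    have hXZ : (gx : F) * (gy : F) ^ (2 ^ m) = (gx : F) ^ (2 ^ m) * (gy : F) :=
      aux_main m i j hi hj hF hgcd2 htwo hfresh gx gy lam hlam hT
    set w : Fˣ := gx * gy⁻¹ with hwdef
    have hwv : (w : F) = (gx : F) * ((gy : F))⁻¹ := by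
      rw [hwdef, Units.val_mul, Units.val_inv_eq_inv_val]
    have hwF : (w : F) ^ (2 ^ m) = (w : F) := by
      rw [hwv, mul_pow, inv_pow]
      have hyne : ((gy : F)) ≠ 0 := Units.ne_zero _
      have hyqne : ((gy : F)) ^ (2 ^ m) ≠ 0 := pow_ne_zero _ hyne
      field_simp
      linear_combination -hXZ
    have hgx : gx = w * gy := by rw [hwdef, inv_mul_cancel_right]
    have hxw : (gx : F) = (w : F) * (gy : F) := by
      rw [hwv]
      field_simp
    have hTX2 : auxT (2 ^ m) (2 ^ (i - 1)) (2 ^ (j - 1)) ((gx : F))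
        = (w : F) ^ (2 ^ (i - 1) + 2 ^ (j - 1)) * auxT (2 ^ m) (2 ^ (i - 1)) (2 ^ (j - 1)) ((gy : F)) := by
      conv_lhs => rw [hxw]
      exact aux_homT (2 ^ m) (2 ^ (i - 1)) (2 ^ (j - 1)) ((w : F)) ((gy : F)) hwF
    rw [hTX2, hgx, mul_zpow, Units.val_mul] at hxy
    have hne2 : ((gy ^ M : Fˣ) : F) * auxT (2 ^ m) (2 ^ (i - 1)) (2 ^ (j - 1)) ((gy : F)) ≠ 0 :=
      mul_ne_zero hgyMne h9y
    have h5 : (((w ^ M : Fˣ) : F) * (w : F) ^ (2 ^ (i - 1) + 2 ^ (j - 1)))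
        * (((gy ^ M : Fˣ) : F) * auxT (2 ^ m) (2 ^ (i - 1)) (2 ^ (j - 1)) ((gy : F)))
        = 1 * (((gy ^ M : Fˣ) : F) * auxT (2 ^ m) (2 ^ (i - 1)) (2 ^ (j - 1)) ((gy : F))) := by
      rw [one_mul]
      linear_combination hxy
    have hone := mul_right_cancel₀ hne2 h5
    have honeu : w ^ M * w ^ ((2 ^ (i - 1) + 2 ^ (j - 1) : ℕ) : ℤ) = 1 := by
      rw [zpow_natCast]
      apply Units.ext
      rw [Units.val_mul, Units.val_pow_eq_pow_val, Units.val_one]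
      exact hone
    have hKe : w ^ (M + ((2 ^ (i - 1) + 2 ^ (j - 1) : ℕ) : ℤ)) = 1 := by
      rw [zpow_add]
      exact honeu
    have hwu : w ^ ((2 : ℤ) ^ m - 1) = 1 := by
      have hwq : w ^ (2 ^ m : ℕ) = w := by
        apply Units.ext
        rw [Units.val_pow_eq_pow_val]
        exact hwF
      rw [sub_eq_add_neg, zpow_add, zpow_neg, zpow_one,
        show ((2 : ℤ) ^ m) = ((2 ^ m : ℕ) : ℤ) by push_cast; ring, zpow_natCast, hwq]
      simp
    have hod1 := orderOf_dvd_iff_zpow_eq_one.mpr hKe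
    have hod2 := orderOf_dvd_iff_zpow_eq_one.mpr hwu
    have hodd1 : ((orderOf w : ℤ)) ∣ d₁ := by
      have he : d₁ = (M + ((2 ^ (i - 1) + 2 ^ (j - 1) : ℕ) : ℤ)) + (2 ^ (j - 1)) * ((2 : ℤ) ^ m - 1) := by
        rw [hd₁, hM]
        push_cast
        ring
      rw [he]
      exact dvd_add hod1 (Dvd.dvd.mul_left hod2 _)
    have hodd2 : ((orderOf w : ℤ)) ∣ (2 : ℤ) ^ (2 * m) - 1 := by
      have he : (2 : ℤ) ^ (2 * m) - 1 = ((2 : ℤ) ^ m - 1) * ((2 : ℤ) ^ m + 1) := by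
        rw [two_mul, pow_add]
        ring
      rw [he]
      exact Dvd.dvd.mul_right hod2 _
    have h10 : ((orderOf w : ℤ)) ∣ ((Int.gcd d₁ ((2 : ℤ) ^ (2 * m) - 1) : ℕ) : ℤ) :=
      Int.dvd_coe_gcd hodd1 hodd2
    rw [hgcd1] at h10
    have how1 : orderOf w = 1 := Nat.dvd_one.mp (by exact_mod_cast h10)
    have hw1 : w = 1 := orderOf_eq_one_iff.mp how1
    have hgg : gx = gy := by
      rw [hwdef] at hw1
      exact mul_inv_eq_one.mp hw1
    rw [hxg, hyg, hgg]
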